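/- Suppose A ⊆ ℤ_{≥0}^n is finite, layer-decomposable (A = A_1 ∪ … ∪ A_n), and k-compressed for all k < i. Then A' = C_i(A) is k-compressed for all k ≤ i, and A' is layer-decomposable. -/
import Mathlib


namespace ProjWA

variable {ι : Type*}

/-- `A ⊆ ℤ^ι` is a weak antichain if it contains no `x, y` with `x i < y i` for every `i`. -/
def IsWeakAntichain [Fintype ι] (A : Finset (ι → ℤ)) : Prop :=
  ∀ x ∈ A, ∀ y ∈ A, ¬ ∀ i, x i < y i

/-- The projection deleting the coordinate `i`. -/
def projFun [DecidableEq ι] (i : ι) (x : ι → ℤ) : {j : ι // j ≠ i} → ℤ :=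
  fun j => x j.1

/-- The image of a finite set under the projection deleting coordinate `i`. -/
def proj [Fintype ι] [DecidableEq ι] (i : ι) (A : Finset (ι → ℤ)) :
    Finset ({j : ι // j ≠ i} → ℤ) :=
  A.image (projFun i)

/-- `gap A = Σ_i |π_i(A)| - |A|`. -/
def gap [Fintype ι] [DecidableEq ι] (A : Finset (ι → ℤ)) : ℤ :=
  (∑ i : ι, ((proj i A).card : ℤ)) - A.card

/-- `X_n`: the set of points of `ℤ_{≥0}^ι` having at least one coordinate equal to zero. -/
def XSet (ι : Type*) : Set (ι → ℤ) :=
  {x | (∀ i, 0 ≤ x i) ∧ ∃ i, x i = 0}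

/-- A down-set in `ℤ_{≥0}^ι`. -/
def IsDownSet (A : Finset (ι → ℤ)) : Prop :=
  ∀ x y : ι → ℤ, (∀ i, 0 ≤ x i) → (∀ i, x i ≤ y i) → y ∈ A → x ∈ A

/-- The `i`-th bottom layer `B_i(A)`. -/
def bottomLayer [Fintype ι] [DecidableEq ι] (i : ι) (A : Finset (ι → ℤ)) : Finset (ι → ℤ) :=
  A.filter fun x => ∀ y ∈ A, (∀ j, j ≠ i → y j = x j) → x i ≤ y i

/-- The `i`-compression `C_i(A)`: each `x ∈ B_i(A)` is replaced by the point obtained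
by setting its `i`-th coordinate to `0`. -/
def compress [Fintype ι] [DecidableEq ι] (i : ι) (A : Finset (ι → ℤ)) : Finset (ι → ℤ) :=
  (A \ bottomLayer i A) ∪ (bottomLayer i A).image fun x => Function.update x i 0

/-- `layersRest A k = A \ (A_1 ∪ ⋯ ∪ A_k)` where `A_i` are the layers of `A`. -/
def layersRest {n : ℕ} (A : Finset (Fin n → ℤ)) : ℕ → Finset (Fin n → ℤ)
  | 0 => A
  | k + 1 =>
      layersRest A k \ (if h : k < n then bottomLayer ⟨k, h⟩ (layersRest A k) else ∅)

/-- The layers `A_1, …, A_n` of `A`, defined by `A_i = B_i(A \ (A_1 ∪ ⋯ ∪ A_{i-1}))`. -/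
def layer {n : ℕ} (A : Finset (Fin n → ℤ)) (i : Fin n) : Finset (Fin n → ℤ) :=
  bottomLayer i (layersRest A i.1)

/-- `compressUpTo A k = C_k(C_{k-1}(⋯(C_1(A))⋯))`. -/
def compressUpTo {n : ℕ} (A : Finset (Fin n → ℤ)) : ℕ → Finset (Fin n → ℤ)
  | 0 => A
  | k + 1 =>
      if h : k < n then compress ⟨k, h⟩ (compressUpTo A k) else compressUpTo A k

/-- The complete `i`-compression `𝒞_i(A)`: every line in direction `i` is replaced
by an initial segment of the same size. -/
def ccompress [Fintype ι] [DecidableEq ι] (i : ι) (A : Finset (ι → ℤ)) : Finset (ι → ℤ) :=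
  A.biUnion fun x =>
    (Finset.range ((A.filter fun y => ∀ j, j ≠ i → y j = x j).card)).image fun a : ℕ =>
      Function.update x i (a : ℤ)

/-- The set `T = {i : x i ≠ y i}` of coordinates where `x` and `y` differ. -/
def diffSet [Fintype ι] (x y : ι → ℤ) : Finset ι :=
  Finset.univ.filter fun i => x i ≠ y i

/-- The maximum value of `x` on a finite set of coordinates (`⊥` if the set is empty). -/
def maxOn (s : Finset ι) (x : ι → ℤ) : WithBot ℤ :=
  (s.image x).max

/-- The largest coordinate in `s` at which `x` attains its maximum over `s`. -/
def argmaxOn [LinearOrder ι] (s : Finset ι) (x : ι → ℤ) : WithBot ι :=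
  (s.filter fun i => (x i : WithBot ℤ) = maxOn s x).max

/-- The balanced order: with `T = {i : x i ≠ y i}`, `x < y` iff the maximum of `x` on `T` is
smaller than that of `y` on `T`, or they are equal and the largest index where `x` attains
this maximum on `T` is smaller than the corresponding index for `y`. -/
def balancedLT [Fintype ι] [LinearOrder ι] (x y : ι → ℤ) : Prop :=
  x ≠ y ∧
    (maxOn (diffSet x y) x < maxOn (diffSet x y) y ∨
      (maxOn (diffSet x y) x = maxOn (diffSet x y) y ∧
        argmaxOn (diffSet x y) x < argmaxOn (diffSet x y) y))

/-- `I` is an initial segment of the balanced order on `X_ι`. -/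
def IsInitSeg [Fintype ι] [LinearOrder ι] (I : Finset (ι → ℤ)) : Prop :=
  ↑I ⊆ XSet ι ∧ ∀ x ∈ I, ∀ y ∈ XSet ι, balancedLT y x → y ∈ I

/-- `S(A) = {x ∈ ℤ_{>0}^ι : replacing any one coordinate of x by 0 gives an element of A}`. -/
def SSet [DecidableEq ι] (A : Finset (ι → ℤ)) : Set (ι → ℤ) :=
  {x | (∀ k, 0 < x k) ∧ ∀ k, Function.update x k 0 ∈ A}

/-- Insert the value `a` at position `i`. -/
def insertAt [DecidableEq ι] (i : ι) (a : ℤ) (x : {j : ι // j ≠ i} → ℤ) : ι → ℤ :=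
  fun j => if h : j = i then a else x ⟨j, h⟩

/-- `L^i_a(A)`: the elements of `X_{n-1}` which, after inserting the value `a` at
position `i`, give elements of `A`. -/
def Lset [Fintype ι] [DecidableEq ι] (i : ι) (a : ℤ) (A : Finset (ι → ℤ)) :
    Finset ({j : ι // j ≠ i} → ℤ) :=
  (proj i (A.filter fun x => x i = a)).filter fun x' => ∃ j, x' j = 0

/-- `K^i(A)`: the elements of `ℤ_{>0}^{n-1}` which, after inserting a `0` at position `i`,
give elements of `A`. -/
def Kset [Fintype ι] [DecidableEq ι] (i : ι) (A : Finset (ι → ℤ)) :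
    Finset ({j : ι // j ≠ i} → ℤ) :=
  (proj i (A.filter fun x => x i = 0)).filter fun x' => ∀ j, 0 < x' j

/-- `K` is an initial segment of `ℤ_{>0}^{n-1}` with respect to the order `≺` defined by
`x ≺ y` iff inserting a `0` at position `i` into `x` gives a smaller element of `X_n`
(in the balanced order) than inserting a `0` at position `i` into `y`. -/
def IsKInitSeg [Fintype ι] [LinearOrder ι] (i : ι) (K : Finset ({j : ι // j ≠ i} → ℤ)) :
    Prop :=
  (∀ x ∈ K, ∀ j, 0 < x j) ∧
    ∀ x ∈ K, ∀ y : {j : ι // j ≠ i} → ℤ, (∀ j, 0 < y j) →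
      balancedLT (insertAt i 0 y) (insertAt i 0 x) → y ∈ K

/-- `A_N = {x ∈ ℤ^n : 0 ≤ x_j ≤ N-1 for all j, and x_i = 0 for some i}`. -/
def ANbox (n N : ℕ) : Finset (Fin n → ℤ) :=
  (Fintype.piFinset fun _ : Fin n => (Finset.range N).image fun k : ℕ => (k : ℤ)).filter
    fun x => ∃ i, x i = 0

/-- `g(n,m)`: the minimum of `gap A` over weak antichains `A` of size `m` in `ℤ^n`. -/
noncomputable def gMin (n m : ℕ) : ℝ :=
  sInf {r : ℝ | ∃ A : Finset (Fin n → ℤ), IsWeakAntichain A ∧ A.card = m ∧ (gap A : ℝ) = r}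


section Aux

variable [Fintype ι] [DecidableEq ι]

lemma mem_bottomLayer_iff {k : ι} {S : Finset (ι → ℤ)} {x : ι → ℤ} :
    x ∈ bottomLayer k S ↔ x ∈ S ∧ ∀ y ∈ S, (∀ j, j ≠ k → y j = x j) → x k ≤ y k := by
  simp [bottomLayer, Finset.mem_filter]

lemma bottomLayer_subset {k : ι} {S : Finset (ι → ℤ)} : bottomLayer k S ⊆ S :=
  Finset.filter_subset _ _

lemma mem_bottomLayer_of_zero {k : ι} {S : Finset (ι → ℤ)} {x : ι → ℤ}
    (h0 : ∀ y ∈ S, ∀ j, 0 ≤ y j) (hx : x ∈ S) (hxk : x k = 0) : x ∈ bottomLayer k S :=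
  mem_bottomLayer_iff.2 ⟨hx, fun y hy _ => hxk ▸ h0 y hy k⟩

lemma exists_line_min {k : ι} {S : Finset (ι → ℤ)} {x : ι → ℤ} (hx : x ∈ S) :
    ∃ m ∈ bottomLayer k S, ∀ j, j ≠ k → m j = x j := by
  obtain ⟨m, hm, hmin⟩ := Finset.exists_min_image
    (S.filter fun y => ∀ j, j ≠ k → y j = x j) (fun y => y k) ⟨x, by simp [hx]⟩
  rw [Finset.mem_filter] at hm
  refine ⟨m, mem_bottomLayer_iff.2 ⟨hm.1, fun y hy hagree => ?_⟩, hm.2⟩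
  exact hmin y (Finset.mem_filter.2 ⟨hy, fun j hj => (hagree j hj).trans (hm.2 j hj)⟩)

lemma update_mem_compress {i : ι} {A : Finset (ι → ℤ)} {x : ι → ℤ} (hx : x ∈ A) :
    Function.update x i 0 ∈ compress i A := by
  obtain ⟨m, hm, hagree⟩ := exists_line_min (k := i) hx
  have h : Function.update x i 0 = Function.update m i 0 := by
    funext j
    rcases eq_or_ne j i with rfl | h
    · simp
    · simp [Function.update_of_ne h, hagree j h]
  rw [h, compress]
  exact Finset.mem_union_right _ (Finset.mem_image_of_mem _ hm)

lemma bottomLayer_eq_filter {k : ι} {S : Finset (ι → ℤ)}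
    (h0 : ∀ x ∈ S, ∀ j, 0 ≤ x j)
    (hcl : ∀ x ∈ S, Function.update x k 0 ∈ S) :
    bottomLayer k S = S.filter fun x => x k = 0 := by
  ext x
  rw [mem_bottomLayer_iff, Finset.mem_filter]
  constructor
  · rintro ⟨hxS, hmin⟩
    refine ⟨hxS, le_antisymm ?_ (h0 x hxS k)⟩
    have h := hmin _ (hcl x hxS) (fun j hj => Function.update_of_ne hj 0 x)
    simpa using h
  · rintro ⟨hxS, hx0⟩
    exact ⟨hxS, fun y hy _ => hx0 ▸ h0 y hy k⟩

lemma compress_eq_of_closed {k : ι} {S : Finset (ι → ℤ)}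
    (h0 : ∀ x ∈ S, ∀ j, 0 ≤ x j)
    (hcl : ∀ x ∈ S, Function.update x k 0 ∈ S) :
    compress k S = S := by
  rw [compress, bottomLayer_eq_filter h0 hcl]
  have himg : (S.filter fun x => x k = 0).image (fun x => Function.update x k 0)
      = S.filter fun x => x k = 0 := by
    rw [Finset.image_congr (g := id), Finset.image_id]
    intro x hx
    rw [Finset.mem_coe, Finset.mem_filter] at hx
    show Function.update x k 0 = x
    rw [← hx.2, Function.update_eq_self]
  rw [himg, Finset.sdiff_union_of_subset (Finset.filter_subset _ _)]

lemma closed_of_compress_eq {k : ι} {A : Finset (ι → ℤ)} (hc : compress k A = A) :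
    ∀ x ∈ A, Function.update x k 0 ∈ A := by
  have hB : ∀ m ∈ bottomLayer k A, m k = 0 := by
    intro m hm
    have hmA : m ∈ compress k A := hc.symm ▸ bottomLayer_subset hm
    rw [compress, Finset.mem_union] at hmA
    rcases hmA with h | h
    · exact absurd hm (Finset.mem_sdiff.1 h).2
    · obtain ⟨y, _, hy⟩ := Finset.mem_image.1 h
      rw [← hy]; simp
  intro x hx
  obtain ⟨m, hm, hagree⟩ := exists_line_min (k := k) hx
  have h : Function.update x k 0 = m := by
    funext j
    rcases eq_or_ne j k with rfl | h
    · simp [hB m hm]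
    · simp [Function.update_of_ne h, (hagree j h)]
  rw [h]; exact bottomLayer_subset hm

lemma compress_nonneg {i : ι} {A : Finset (ι → ℤ)} (h0 : ∀ x ∈ A, ∀ j, 0 ≤ x j) :
    ∀ x ∈ compress i A, ∀ j, 0 ≤ x j := by
  intro x hx j
  rw [compress, Finset.mem_union] at hx
  rcases hx with h | h
  · exact h0 x (Finset.mem_sdiff.1 h).1 j
  · obtain ⟨y, hy, rfl⟩ := Finset.mem_image.1 h
    have hyA := bottomLayer_subset hy
    rcases eq_or_ne j i with rfl | hne
    · simp
    · rw [Function.update_of_ne hne]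
      exact h0 y hyA j

lemma closed_compress_self {i : ι} {A : Finset (ι → ℤ)} :
    ∀ x ∈ compress i A, Function.update x i 0 ∈ compress i A := by
  intro x hx
  rw [compress, Finset.mem_union] at hx
  rcases hx with h | h
  · exact update_mem_compress (Finset.mem_sdiff.1 h).1
  · obtain ⟨y, hy, rfl⟩ := Finset.mem_image.1 h
    rw [Function.update_idem]
    exact Finset.mem_union_right _ (Finset.mem_image_of_mem _ hy)

lemma closed_compress_ne {i k : ι} {A : Finset (ι → ℤ)} (hki : k ≠ i)
    (hcl : ∀ x ∈ A, Function.update x k 0 ∈ A) :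
    ∀ x ∈ compress i A, Function.update x k 0 ∈ compress i A := by
  intro x hx
  rw [compress, Finset.mem_union] at hx
  rcases hx with h | h
  · rw [Finset.mem_sdiff] at h
    obtain ⟨hxA, hxB⟩ := h
    refine Finset.mem_union_left _ (Finset.mem_sdiff.2 ⟨hcl x hxA, ?_⟩)
    intro huB
    apply hxB
    rw [mem_bottomLayer_iff] at huB ⊢
    refine ⟨hxA, fun y hy hagree => ?_⟩
    have h2 := huB.2 (Function.update y k 0) (hcl y hy) (fun j hj => by
      rcases eq_or_ne j k with rfl | hjk
      · simp
      · simp [Function.update_of_ne hjk, hagree j hj])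
    rw [Function.update_of_ne hki.symm, Function.update_of_ne hki.symm] at h2
    exact h2
  · obtain ⟨y, hy, rfl⟩ := Finset.mem_image.1 h
    have hyA := bottomLayer_subset hy
    rw [Function.update_comm hki.symm]
    exact update_mem_compress (hcl y hyA)

end Aux

section LayersAux

variable {n : ℕ}

lemma layersRest_subset (S : Finset (Fin n → ℤ)) : ∀ m, layersRest S m ⊆ S
  | 0 => Finset.Subset.refl S
  | m + 1 => (Finset.sdiff_subset).trans (layersRest_subset S m)

lemma layersRest_anti (S : Finset (Fin n → ℤ)) {a : ℕ} : ∀ {b : ℕ}, a ≤ b → layersRest S b ⊆ layersRest S a := by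
  intro b
  induction b with
  | zero => intro h; rw [Nat.le_zero.1 h]
  | succ b ih =>
    intro h
    rcases Nat.lt_or_ge a (b+1) with h' | h'
    · exact (Finset.sdiff_subset).trans (ih (Nat.lt_succ_iff.1 h'))
    · have : a = b + 1 := le_antisymm h h'
      rw [this]

lemma layer_subset (S : Finset (Fin n → ℤ)) (j : Fin n) : layer S j ⊆ S :=
  bottomLayer_subset.trans (layersRest_subset S j.1)

lemma notMem_layersRest_of_mem_layer {S : Finset (Fin n → ℤ)} {j : Fin n} {x : Fin n → ℤ}
    (hx : x ∈ layer S j) : x ∉ layersRest S n := by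
  intro hn
  have h1 : x ∈ layersRest S (j.1 + 1) := layersRest_anti S j.isLt hn
  rw [layersRest, dif_pos j.isLt, Finset.mem_sdiff] at h1
  apply h1.2
  have : (⟨j.1, j.isLt⟩ : Fin n) = j := rfl
  rw [this]
  exact hx

lemma mem_layer_of_notMem_layersRest {S : Finset (Fin n → ℤ)} {x : Fin n → ℤ} :
    ∀ m, x ∈ S → x ∉ layersRest S m → ∃ j, x ∈ layer S j := by
  intro m
  induction m with
  | zero => intro hx h; exact absurd hx h
  | succ m ih =>
    intro hx h
    by_cases hm : x ∈ layersRest S m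
    · rw [layersRest, Finset.mem_sdiff] at h
      push_neg at h
      have h2 := h hm
      by_cases hn : m < n
      · rw [dif_pos hn] at h2
        exact ⟨⟨m, hn⟩, h2⟩
      · rw [dif_neg hn] at h2
        exact absurd h2 (Finset.notMem_empty x)
    · exact ih hx hm

lemma decomp_iff (S : Finset (Fin n → ℤ)) :
    S = Finset.univ.biUnion (layer S) ↔ layersRest S n = ∅ := by
  constructor
  · intro h
    rw [Finset.eq_empty_iff_forall_notMem]
    intro x hx
    have hxS : x ∈ S := layersRest_subset S n hx
    rw [h, Finset.mem_biUnion] at hxS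
    obtain ⟨j, _, hj⟩ := hxS
    exact notMem_layersRest_of_mem_layer hj hx
  · intro h
    apply Finset.Subset.antisymm
    · intro x hx
      obtain ⟨j, hj⟩ := mem_layer_of_notMem_layersRest n hx (h ▸ Finset.notMem_empty x)
      exact Finset.mem_biUnion.2 ⟨j, Finset.mem_univ j, hj⟩
    · intro x hx
      obtain ⟨j, _, hj⟩ := Finset.mem_biUnion.1 hx
      exact layer_subset S j hj

lemma layersRest_eq_filter (S : Finset (Fin n → ℤ)) (h0 : ∀ x ∈ S, ∀ j, 0 ≤ x j) :
    ∀ M, M ≤ n → (∀ k : Fin n, (k : ℕ) < M → ∀ x ∈ S, Function.update x k 0 ∈ S) →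
    layersRest S M = S.filter fun x => ∀ j : Fin n, (j : ℕ) < M → 0 < x j := by
  intro M
  induction M with
  | zero =>
    intro _ _
    rw [layersRest, Finset.filter_true_of_mem]
    intro x _ j hj
    exact absurd hj (Nat.not_lt_zero _)
  | succ M ih =>
    intro hM hcl
    have hMn : M < n := hM
    set kM : Fin n := ⟨M, hMn⟩ with hkM
    have hR : layersRest S M = S.filter fun x => ∀ j : Fin n, (j : ℕ) < M → 0 < x j :=
      ih (Nat.le_of_succ_le hM) (fun k hk => hcl k (Nat.lt_succ_of_lt hk))
    have hR0 : ∀ x ∈ layersRest S M, ∀ j, 0 ≤ x j :=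
      fun x hx => h0 x (layersRest_subset S M hx)
    have hRcl : ∀ x ∈ layersRest S M, Function.update x kM 0 ∈ layersRest S M := by
      intro x hx
      rw [hR, Finset.mem_filter] at hx ⊢
      refine ⟨hcl kM (Nat.lt_succ_self M) x hx.1, fun j hj => ?_⟩
      have hjk : j ≠ kM := by
        intro h; rw [h] at hj; exact Nat.lt_irrefl M hj
      rw [Function.update_of_ne hjk]
      exact hx.2 j hj
    rw [layersRest, dif_pos hMn]
    rw [bottomLayer_eq_filter hR0 hRcl]
    ext x
    rw [Finset.mem_sdiff, Finset.mem_filter, hR, Finset.mem_filter, Finset.mem_filter]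
    constructor
    · rintro ⟨⟨hxS, hpos⟩, hne⟩
      refine ⟨hxS, fun j hj => ?_⟩
      rcases Nat.lt_or_ge (j : ℕ) M with h' | h'
      · exact hpos j h'
      · have hjM : j = kM := Fin.ext (le_antisymm (Nat.lt_succ_iff.1 hj) h')
        have hx0 : ¬ x kM = 0 := by
          intro h
          exact hne ⟨⟨hxS, hpos⟩, h⟩
        rw [hjM]
        exact lt_of_le_of_ne (h0 x hxS kM) (Ne.symm hx0)
    · rintro ⟨hxS, hpos⟩
      refine ⟨⟨hxS, fun j hj => hpos j (Nat.lt_succ_of_lt hj)⟩, ?_⟩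
      rintro ⟨-, h0'⟩
      have := hpos kM (Nat.lt_succ_self M)
      omega

lemma layersRest_congr {S T : Finset (Fin n → ℤ)} {a : ℕ}
    (h : layersRest S a = layersRest T a) : ∀ d, layersRest S (a + d) = layersRest T (a + d)
  | 0 => h
  | d + 1 => by
    have h2 := layersRest_congr h d
    show layersRest S ((a + d) + 1) = layersRest T ((a + d) + 1)
    rw [layersRest, layersRest, h2]

end LayersAux

/-- If `A ⊆ ℤ_{≥0}^n` is finite, layer-decomposable, and `k`-compressed for
all `k < i`, then `A' = C_i(A)` is `k`-compressed for all `k ≤ i` and layer-decomposable. -/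
theorem compress_compressed_and_layerDecomposable (n : ℕ) (A : Finset (Fin n → ℤ))
    (hA : ∀ x ∈ A, ∀ i, 0 ≤ x i)
    (hdec : A = Finset.univ.biUnion (layer A)) (i : Fin n)
    (hcomp : ∀ k : Fin n, k < i → compress k A = A) :
    (∀ k : Fin n, k ≤ i → compress k (compress i A) = compress i A) ∧
      compress i A = Finset.univ.biUnion (layer (compress i A)) := by
  have h0' : ∀ x ∈ compress i A, ∀ j, 0 ≤ x j := compress_nonneg hA
  have hclA : ∀ k : Fin n, k < i → ∀ x ∈ A, Function.update x k 0 ∈ A :=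
    fun k hk => closed_of_compress_eq (hcomp k hk)
  have hcl' : ∀ k : Fin n, k ≤ i →
      ∀ x ∈ compress i A, Function.update x k 0 ∈ compress i A := by
    intro k hk
    rcases eq_or_lt_of_le hk with rfl | hlt
    · exact closed_compress_self
    · exact closed_compress_ne (ne_of_lt hlt) (hclA k hlt)
  refine ⟨fun k hk => compress_eq_of_closed h0' (hcl' k hk), ?_⟩
  rw [decomp_iff]
  have hdecA : layersRest A n = ∅ := (decomp_iff A).1 hdec
  have hRA : layersRest A i.1 = A.filter fun x => ∀ j : Fin n, (j : ℕ) < i.1 → 0 < x j :=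
    layersRest_eq_filter A hA i.1 (Nat.le_of_lt i.isLt) (fun k hk => hclA k hk)
  have hRA' : layersRest (compress i A) (i.1 + 1) =
      (compress i A).filter fun x => ∀ j : Fin n, (j : ℕ) < i.1 + 1 → 0 < x j :=
    layersRest_eq_filter (compress i A) h0' (i.1 + 1) i.isLt
      (fun k hk => hcl' k (Nat.lt_succ_iff.1 hk))
  have hA1 : layersRest A (i.1 + 1) =
      (A.filter fun x => ∀ j : Fin n, (j : ℕ) < i.1 → 0 < x j) \
        bottomLayer i (A.filter fun x => ∀ j : Fin n, (j : ℕ) < i.1 → 0 < x j) := by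
    rw [layersRest, dif_pos i.isLt, hRA]
  have hstep : layersRest (compress i A) (i.1 + 1) = layersRest A (i.1 + 1) := by
    rw [hRA', hA1]
    ext x
    rw [Finset.mem_filter, Finset.mem_sdiff, Finset.mem_filter]
    constructor
    · rintro ⟨hxA', hQ⟩
      have hxi : 0 < x i := hQ i (Nat.lt_succ_self _)
      have hxAB : x ∈ A ∧ x ∉ bottomLayer i A := by
        rw [compress, Finset.mem_union] at hxA'
        rcases hxA' with h | h
        · exact Finset.mem_sdiff.1 h
        · obtain ⟨y, hy, rfl⟩ := Finset.mem_image.1 h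
          exact absurd hxi (by simp)
      refine ⟨⟨hxAB.1, fun j hj => hQ j (Nat.lt_succ_of_lt hj)⟩, ?_⟩
      intro hxB
      apply hxAB.2
      rw [mem_bottomLayer_iff] at hxB ⊢
      refine ⟨hxAB.1, fun y hy hagree => ?_⟩
      refine hxB.2 y (Finset.mem_filter.2 ⟨hy, fun j hj => ?_⟩) hagree
      have hji : j ≠ i := by intro h; rw [h] at hj; omega
      rw [hagree j hji]
      exact hQ j (Nat.lt_succ_of_lt hj)
    · rintro ⟨⟨hxA, hP⟩, hxB⟩
      have hxi : 0 < x i := by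
        rcases lt_or_eq_of_le (hA x hxA i) with h | h
        · exact h
        · exact absurd (mem_bottomLayer_of_zero
            (fun y hy => hA y ((Finset.filter_subset _ _) hy))
            (Finset.mem_filter.2 ⟨hxA, hP⟩) h.symm) hxB
      have hxBA : x ∉ bottomLayer i A := by
        intro h
        apply hxB
        rw [mem_bottomLayer_iff] at h ⊢
        exact ⟨Finset.mem_filter.2 ⟨hxA, hP⟩,
          fun y hy hagree => h.2 y ((Finset.filter_subset _ _) hy) hagree⟩
      refine ⟨?_, fun j hj => ?_⟩
      · rw [compress]
        exact Finset.mem_union_left _ (Finset.mem_sdiff.2 ⟨hxA, hxBA⟩)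
      · rcases Nat.lt_or_ge (j : ℕ) i.1 with h | h
        · exact hP j h
        · have hj' : j = i := Fin.ext (le_antisymm (Nat.lt_succ_iff.1 hj) h)
          rw [hj']; exact hxi
  have hfin : layersRest (compress i A) n = layersRest A n := by
    have hin := i.isLt
    have hn : i.1 + 1 + (n - (i.1 + 1)) = n := by omega
    have h2 := layersRest_congr hstep (n - (i.1 + 1))
    rwa [hn] at h2
  rw [hfin, hdecA]

end ProjWA
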